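/- Define polynomials H_n(x,δ) ∈ ℝ[x] by H_0 = 1, H_1 = 2x, and H_{n+1}(x,δ) = 2x H_n(x,δ) - (2n + n(n-1)δ) H_{n-1}(x,δ). Then for every n ≥ 0, H_n(x,δ) satisfies the functional equation (x + i/√δ) H_n(x + i√δ, δ) - (x - i/√δ) H_n(x - i√δ, δ) = 2i · ((1 + nδ)/√δ) · H_n(x, δ), as an identity of polynomial functions over ℂ, for any δ > 0. -/

import Mathlib

open Polynomial

/-- Deformed Hermite polynomials `H_n(x,δ)` (as polynomials over `ℂ`), defined by the
three-term recurrence `H_{n+1} = 2x H_n - (2n + n(n-1)δ) H_{n-1}`, `H_0 = 1`, `H_1 = 2x`. -/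
noncomputable def deformedHermiteC (δ : ℝ) : ℕ → Polynomial ℂ
  | 0 => 1
  | 1 => 2 * Polynomial.X
  | (n + 2) =>
      2 * Polynomial.X * deformedHermiteC δ (n + 1)
        - Polynomial.C (2 * ((n : ℂ) + 1) + ((n : ℂ) + 1) * (n : ℂ) * (δ : ℂ)) *
            deformedHermiteC δ n

private lemma dh_rec' (δ : ℝ) (x : ℂ) (n : ℕ) :
    2 * x * (deformedHermiteC δ n).eval x
      = (deformedHermiteC δ (n + 1)).eval x
        + (2 * (n : ℂ) + (n : ℂ) * ((n : ℂ) - 1) * (δ : ℂ)) *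
            (deformedHermiteC δ (n - 1)).eval x := by
  cases n with
  | zero => simp [deformedHermiteC]
  | succ m =>
      simp only [Nat.add_sub_cancel, deformedHermiteC, eval_sub, eval_mul, eval_C, eval_X,
        eval_ofNat]
      push_cast
      ring

private lemma dh_key (δ : ℝ) (hδ : 0 < δ) (x : ℂ) (n : ℕ) :
    (((Real.sqrt δ : ℂ) * x + Complex.I) *
        (deformedHermiteC δ n).eval (x + Complex.I * (Real.sqrt δ : ℂ))
      - ((Real.sqrt δ : ℂ) * x - Complex.I) *
        (deformedHermiteC δ n).eval (x - Complex.I * (Real.sqrt δ : ℂ))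
      = 2 * Complex.I * (1 + (n : ℂ) * (δ : ℂ)) * (deformedHermiteC δ n).eval x)
    ∧ (((Real.sqrt δ : ℂ) * x + Complex.I) *
        (deformedHermiteC δ n).eval (x + Complex.I * (Real.sqrt δ : ℂ))
      + ((Real.sqrt δ : ℂ) * x - Complex.I) *
        (deformedHermiteC δ n).eval (x - Complex.I * (Real.sqrt δ : ℂ))
      = 2 * (Real.sqrt δ : ℂ) * x * (deformedHermiteC δ n).eval x
        - 2 * (Real.sqrt δ : ℂ) * (2 * (n : ℂ) + (n : ℂ) * ((n : ℂ) - 1) * (δ : ℂ)) *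
            (deformedHermiteC δ (n - 1)).eval x) := by
  have hs2 : ((Real.sqrt δ : ℂ)) ^ 2 = (δ : ℂ) := by
    rw [← Complex.ofReal_pow, Real.sq_sqrt hδ.le]
  set s : ℂ := ((Real.sqrt δ : ℂ)) with hsdef
  induction n using Nat.strong_induction_on with
  | _ n ih =>
    rcases n with _ | _ | m
    · constructor
      · simp only [deformedHermiteC, eval_one]
        push_cast
        ring
      · simp only [deformedHermiteC, Nat.zero_sub, eval_one]
        push_cast
        ring
    · constructor
      · simp only [deformedHermiteC, eval_mul, eval_X, eval_ofNat, eval_one]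
        push_cast
        linear_combination (4 * Complex.I * x) * hs2
      · simp only [deformedHermiteC, eval_mul, eval_X, eval_ofNat, eval_one, Nat.sub_self,
          Nat.add_sub_cancel]
        push_cast
        linear_combination (4 * s) * Complex.I_sq
    · obtain ⟨hP0, hQ0⟩ := ih m (by omega)
      obtain ⟨hP1, hQ1⟩ := ih (m + 1) (by omega)
      rw [Nat.add_sub_cancel] at hQ1
      have hrec : (deformedHermiteC δ (m + 2)).eval x
          = 2 * x * (deformedHermiteC δ (m + 1)).eval x
            - (2 * ((m : ℂ) + 1) + ((m : ℂ) + 1) * (m : ℂ) * (δ : ℂ)) *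
                (deformedHermiteC δ m).eval x := by
        simp [deformedHermiteC]
      have hrecn := dh_rec' δ x m
      push_cast at hP0 hQ0 hP1 hQ1 hrecn
      constructor
      · simp only [deformedHermiteC, eval_sub, eval_mul, eval_C, eval_X, eval_ofNat]
        push_cast
        linear_combination (2 * x) * hP1 + (2 * Complex.I * s) * hQ1
          - (2 * ((m : ℂ) + 1) + ((m : ℂ) + 1) * (m : ℂ) * (δ : ℂ)) * hP0
          + (4 * Complex.I * x * (deformedHermiteC δ (m + 1)).eval x
             - 4 * Complex.I * (2 * ((m : ℂ) + 1) + ((m : ℂ) + 1) * (m : ℂ) * (δ : ℂ)) *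
                (deformedHermiteC δ m).eval x) * hs2
      · simp only [deformedHermiteC, eval_sub, eval_mul, eval_C, eval_X, eval_ofNat,
          Nat.add_sub_cancel]
        push_cast
        linear_combination (2 * x) * hQ1 + (2 * Complex.I * s) * hP1
          - (2 * ((m : ℂ) + 1) + ((m : ℂ) + 1) * (m : ℂ) * (δ : ℂ)) * hQ0
          - (2 * s * (2 * ((m : ℂ) + 1) + ((m : ℂ) + 1) * (m : ℂ) * (δ : ℂ))) * hrecn
          + (4 * s * (1 + ((m : ℂ) + 1) * (δ : ℂ)) * (deformedHermiteC δ (m + 1)).eval x) *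
              Complex.I_sq

theorem deformedHermite_functional_equation (δ : ℝ) (hδ : 0 < δ) (n : ℕ) (x : ℂ) :
    (x + Complex.I / (Real.sqrt δ : ℂ)) *
        (deformedHermiteC δ n).eval (x + Complex.I * (Real.sqrt δ : ℂ))
      - (x - Complex.I / (Real.sqrt δ : ℂ)) *
        (deformedHermiteC δ n).eval (x - Complex.I * (Real.sqrt δ : ℂ))
      = 2 * Complex.I * ((1 + (n : ℂ) * (δ : ℂ)) / (Real.sqrt δ : ℂ)) *
          (deformedHermiteC δ n).eval x := by
  have hs : ((Real.sqrt δ : ℂ)) ≠ 0 := by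
    simpa using (Real.sqrt_pos.mpr hδ).ne'
  have h := (dh_key δ hδ x n).1
  field_simp
  linear_combination h
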